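/- arXiv:1601.00399 — 2 statements merged into one kernel-verified Lean document; each statement's English description precedes it below -/
import Mathlib

section
/- Transitivity and marginal-reduction properties of the alternative embedding: let A ⊆ [n] with |A| ≥ 2 and π ∈ Γ(A). (1) For all subsets A', C with A ⊆ A' ⊆ C ⊆ [n] and |A'| ≥ 2: φ'_C(φ'_{A'} δ_π) = φ'_C δ_π. (2) For all subsets B, C ⊆ [n] with |B| ≥ 2 and A ∪ B ⊆ C: M_B(φ'_C δ_π) = M_B(φ'_{A∪B} δ_π). -/
open Finset
open scoped List

abbrev Word (n : ℕ) := List (Fin n)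

/-- `Γ(A)`: duplicate-free words whose set of letters is exactly `A`. -/
noncomputable def rankings (n : ℕ) (A : Finset (Fin n)) : Finset (Word n) :=
  A.toList.permutations.toFinset

/-- All duplicate-free words on `[n]`. -/
noncomputable def allWords (n : ℕ) : Finset (Word n) :=
  Finset.univ.biUnion fun A : Finset (Fin n) => rankings n A

def IsRanking {n : ℕ} (A : Finset (Fin n)) (w : Word n) : Prop :=
  w.Nodup ∧ w.toFinset = A

instance {n : ℕ} (A : Finset (Fin n)) (w : Word n) : Decidable (IsRanking A w) :=
  inferInstanceAs (Decidable (w.Nodup ∧ w.toFinset = A))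

/-- Membership in `L(Γ(A))`: functions supported on `Γ(A)`. -/
def MemL {n : ℕ} (A : Finset (Fin n)) (F : Word n → ℝ) : Prop :=
  ∀ w, F w ≠ 0 → IsRanking A w

/-- Marginal operator `M_B` (with the convention `M_∅ F = (Σ F)·δ_0̄`). -/
noncomputable def marg {n : ℕ} (B : Finset (Fin n)) (F : Word n → ℝ) : Word n → ℝ :=
  fun π => if IsRanking B π then ∑ σ ∈ allWords n, (if π <+ σ then F σ else 0) else 0

/-- Membership in the localization space `H_B` (for `B = ∅` this is `L(Γ(∅)) = ℝ·δ_0̄`). -/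
def MemH {n : ℕ} (B : Finset (Fin n)) (F : Word n → ℝ) : Prop :=
  MemL B F ∧
    (∀ B' : Finset (Fin n), B' ⊂ B → 2 ≤ B'.card → marg B' F = 0) ∧
    (2 ≤ B.card → ∑ π ∈ rankings n B, F π = 0)

/-- `P̄(A) = {B ⊆ A : |B| ≥ 2} ∪ {∅}`. -/
def Pbar {n : ℕ} (A : Finset (Fin n)) : Finset (Finset (Fin n)) :=
  A.powerset.filter fun B => 2 ≤ B.card ∨ B = ∅

/-- Synthesis operator `φ_A`. -/
noncomputable def synth {n : ℕ} (A : Finset (Fin n)) (F : Word n → ℝ) : Word n → ℝ :=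
  fun σ =>
    if IsRanking A σ then
      F [] / (Nat.factorial A.card : ℝ) +
        ∑ π ∈ allWords n,
          (if π ≠ [] ∧ π <:+: σ then F π / (Nat.factorial (A.card - π.length + 1) : ℝ) else 0)
    else 0

/-- Dirac function `δ_π`. -/
noncomputable def dirac {n : ℕ} (π : Word n) : Word n → ℝ :=
  fun w => if w = π then 1 else 0

/-- `σ|_C`: the induced word of `σ` on `C`. -/
def restrictWord {n : ℕ} (σ : Word n) (C : Finset (Fin n)) : Word n :=
  σ.filter fun a => decide (a ∈ C)

/-- The alternative embedding `φ'_B`: `φ'_B δ_π = (|π|!/|B|!)·1_{{σ ∈ Γ(B) : π ⊂ σ}}`. -/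
noncomputable def synth' {n : ℕ} (B : Finset (Fin n)) (F : Word n → ℝ) : Word n → ℝ :=
  fun σ =>
    if IsRanking B σ then
      ∑ π ∈ allWords n,
        (if π <+ σ then ((Nat.factorial π.length : ℝ) / (Nat.factorial B.card : ℝ)) * F π else 0)
    else 0

lemma mem_rankings_iff {n : ℕ} {A : Finset (Fin n)} {w : Word n} :
    w ∈ rankings n A ↔ IsRanking A w := by
  rw [rankings, List.mem_toFinset, List.mem_permutations]
  constructor
  · intro h
    exact ⟨h.symm.nodup A.nodup_toList, by rw [List.toFinset_eq_of_perm _ _ h, Finset.toList_toFinset]⟩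
  · rintro ⟨h1, h2⟩
    rw [← h2]
    exact (List.toFinset_toList h1).symm

lemma mem_allWords {n : ℕ} {w : Word n} : w ∈ allWords n ↔ w.Nodup := by
  simp only [allWords, Finset.mem_biUnion, Finset.mem_univ, true_and, mem_rankings_iff]
  constructor
  · rintro ⟨A, h1, _⟩; exact h1
  · intro h; exact ⟨w.toFinset, h, rfl⟩

/-- uniqueness: a nodup sublist of a nodup list is determined by its letters. -/
lemma sublist_eq_filter {n : ℕ} {σ τ : Word n} {B : Finset (Fin n)}
    (hσ : σ.Nodup) (hτ : τ.Nodup) (hsub : τ <+ σ) (hB : τ.toFinset = B) :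
    τ = σ.filter (fun a => a ∈ B) := by
  have hfil : τ.filter (fun a => a ∈ B) = τ := by
    rw [List.filter_eq_self]
    intro a ha
    simp [← hB, List.mem_toFinset.mpr ha]
  have hsub2 : τ <+ σ.filter (fun a => a ∈ B) := by
    rw [← hfil]; exact hsub.filter _
  apply hsub2.eq_of_length
  have hBsub : B ⊆ σ.toFinset := by
    rw [← hB]; intro a ha
    rw [List.mem_toFinset] at *
    exact hsub.mem ha
  have h1 : (σ.filter (fun a => a ∈ B)).toFinset = B := by
    ext a
    simp only [List.mem_toFinset, List.mem_filter, decide_eq_true_iff]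
    exact ⟨fun h => h.2, fun h => ⟨List.mem_toFinset.mp (hBsub h), h⟩⟩
  rw [← List.toFinset_card_of_nodup hτ, ← List.toFinset_card_of_nodup (hσ.filter _), hB, h1]

lemma isRanking_filter {n : ℕ} {σ : Word n} {C B : Finset (Fin n)}
    (hσ : IsRanking C σ) (hBC : B ⊆ C) :
    IsRanking B (σ.filter (fun a => a ∈ B)) := by
  refine ⟨hσ.1.filter _, ?_⟩
  ext a
  simp only [List.mem_toFinset, List.mem_filter, decide_eq_true_iff]
  exact ⟨fun h => h.2, fun h => ⟨by rw [← List.mem_toFinset, hσ.2]; exact hBC h, h⟩⟩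

lemma sublist_filter_iff {n : ℕ} {π σ : Word n} {B : Finset (Fin n)}
    (hcont : ∀ a ∈ π, a ∈ B) :
    π <+ σ.filter (fun a => a ∈ B) ↔ π <+ σ := by
  constructor
  · intro h; exact h.trans List.filter_sublist
  · intro h
    have : π.filter (fun a => a ∈ B) = π := by
      rw [List.filter_eq_self]; intro a ha; simpa using hcont a ha
    rw [← this]; exact h.filter _

lemma aux_append_inj {n : ℕ} {x : Fin n} : ∀ {l₁ l₂ r₁ r₂ : Word n},
    l₁ ++ x :: r₁ = l₂ ++ x :: r₂ → x ∉ l₁ → x ∉ l₂ → l₁ = l₂ := by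
  intro l₁
  induction l₁ with
  | nil =>
    intro l₂ r₁ r₂ h h₁ h₂
    cases l₂ with
    | nil => rfl
    | cons a l₂' =>
      simp only [List.nil_append, List.cons_append, List.cons.injEq] at h
      exact absurd (h.1 ▸ (List.mem_cons_self : a ∈ a :: l₂')) h₂
  | cons a l₁' ih =>
    intro l₂ r₁ r₂ h h₁ h₂
    cases l₂ with
    | nil =>
      simp only [List.cons_append, List.nil_append, List.cons.injEq] at h
      exact absurd (h.1.symm ▸ (List.mem_cons_self : a ∈ a :: l₁')) h₁
    | cons b l₂' =>
      simp only [List.cons_append, List.cons.injEq] at h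
      have := ih h.2 (fun hm => h₁ (List.mem_cons_of_mem a hm)) (fun hm => h₂ (List.mem_cons_of_mem b hm))
      rw [h.1, this]


/-- one-step extension count -/
lemma card_insert_one {n : ℕ} {D : Finset (Fin n)} {x : Fin n} (hx : x ∉ D)
    {σ' : Word n} (hσ' : IsRanking D σ') :
    ((rankings n (insert x D)).filter (fun ρ => σ' <+ ρ)).card = σ'.length + 1 := by
  have hxσ' : x ∉ σ' := fun h => hx (hσ'.2 ▸ List.mem_toFinset.mpr h)
  rw [← Finset.card_range (σ'.length + 1)]
  apply (Finset.card_bij (fun i _ => σ'.take i ++ x :: σ'.drop i) ?_ ?_ ?_).symm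
  · -- membership
    intro i hi
    have hperm : (σ'.take i ++ x :: σ'.drop i) ~ x :: σ' := by
      have := List.perm_middle (a := x) (l₁ := σ'.take i) (l₂ := σ'.drop i)
      rwa [List.take_append_drop] at this
    rw [Finset.mem_filter, mem_rankings_iff]
    refine ⟨⟨hperm.symm.nodup ?_, ?_⟩, ?_⟩
    · exact List.nodup_cons.mpr ⟨hxσ', hσ'.1⟩
    · rw [List.toFinset_eq_of_perm _ _ hperm, List.toFinset_cons, hσ'.2]
    · conv_lhs => rw [← List.take_append_drop i σ']
      exact (List.Sublist.refl _).append (List.sublist_cons_self _ _)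
  · -- injective
    intro i hi j hj h
    rw [Finset.mem_range] at hi hj
    have h1 : x ∉ σ'.take i := fun hm => hxσ' ((List.take_sublist _ _).mem hm)
    have h2 : x ∉ σ'.take j := fun hm => hxσ' ((List.take_sublist _ _).mem hm)
    have := aux_append_inj h h1 h2
    have hleni : (σ'.take i).length = i := by
      rw [List.length_take]; omega
    have hlenj : (σ'.take j).length = j := by
      rw [List.length_take]; omega
    rw [← hleni, ← hlenj, this]
  · -- surjective
    intro ρ hρ
    rw [Finset.mem_filter, mem_rankings_iff] at hρ
    obtain ⟨hρrank, hρsub⟩ := hρ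
    have hxρ : x ∈ ρ := List.mem_toFinset.mp (hρrank.2 ▸ Finset.mem_insert_self x D)
    obtain ⟨s, t, rfl⟩ := List.append_of_mem hxρ
    have hnd := hρrank.1
    rw [List.nodup_append] at hnd
    obtain ⟨hs, hxt', hdisj⟩ := hnd
    have hxs : x ∉ s := fun hm => (hdisj x hm x List.mem_cons_self rfl)
    have hxt : x ∉ t := (List.nodup_cons.mp hxt').1
    have hst_nodup : (s ++ t).Nodup := by
      rw [List.nodup_append]
      exact ⟨hs, (List.nodup_cons.mp hxt').2, fun a ha b hb => hdisj a ha b (List.mem_cons_of_mem x hb)⟩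
    have hst_sub : s ++ t <+ s ++ x :: t :=
      (List.Sublist.refl s).append (List.sublist_cons_self x t)
    have hst_fin : (s ++ t).toFinset = D := by
      have hperm : (s ++ x :: t) ~ x :: (s ++ t) := List.perm_middle
      have h1 : insert x ((s ++ t).toFinset) = insert x D := by
        rw [← List.toFinset_cons, ← List.toFinset_eq_of_perm _ _ hperm, hρrank.2]
      have hx1 : x ∉ (s ++ t).toFinset := by
        rw [List.toFinset_append, Finset.mem_union]
        push_neg
        exact ⟨fun h => hxs (List.mem_toFinset.mp h), fun h => hxt (List.mem_toFinset.mp h)⟩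
      ext a
      constructor
      · intro ha
        have : a ∈ insert x D := h1 ▸ Finset.mem_insert_of_mem ha
        rcases Finset.mem_insert.mp this with h | h
        · exact absurd (h ▸ ha) hx1
        · exact h
      · intro ha
        have : a ∈ insert x ((s++t).toFinset) := h1.symm ▸ Finset.mem_insert_of_mem ha
        rcases Finset.mem_insert.mp this with h | h
        · exact absurd (h ▸ ha) hx
        · exact h
    -- σ' = s ++ t by uniqueness
    have key : σ' = s ++ t := by
      rw [sublist_eq_filter hρrank.1 hσ'.1 hρsub hσ'.2,
          sublist_eq_filter hρrank.1 hst_nodup hst_sub hst_fin]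
    refine ⟨s.length, ?_, ?_⟩
    · rw [Finset.mem_range, key, List.length_append]; omega
    · subst key
      simp only [List.take_left, List.drop_left]

/-- partition of rankings of C by their restriction to D' -/
lemma card_fiber_sum {n : ℕ} {C D' : Finset (Fin n)} (hD'C : D' ⊆ C)
    (p : Word n → Prop) [DecidablePred p]
    (hp : ∀ σ, IsRanking C σ → (p σ ↔ p (σ.filter (fun a => a ∈ D')))) :
    ((rankings n C).filter p).card =
      ∑ ρ ∈ (rankings n D').filter p, ((rankings n C).filter (fun σ => ρ <+ σ)).card := by
  rw [← Finset.card_biUnion]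
  · congr 1
    ext σ
    constructor
    · intro h
      rw [Finset.mem_filter, mem_rankings_iff] at h
      obtain ⟨hσrank, hσp⟩ := h
      rw [Finset.mem_biUnion]
      refine ⟨σ.filter (fun a => a ∈ D'), ?_, ?_⟩
      · rw [Finset.mem_filter, mem_rankings_iff]
        exact ⟨isRanking_filter hσrank hD'C, (hp σ hσrank).mp hσp⟩
      · rw [Finset.mem_filter, mem_rankings_iff]
        exact ⟨hσrank, List.filter_sublist⟩
    · intro h
      rw [Finset.mem_biUnion] at h
      obtain ⟨ρ, hρ, hσ⟩ := h
      rw [Finset.mem_filter, mem_rankings_iff] at hρ hσ ⊢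
      obtain ⟨hρrank, hρp⟩ := hρ
      obtain ⟨hσrank, hρσ⟩ := hσ
      refine ⟨hσrank, ?_⟩
      have heq : ρ = σ.filter (fun a => a ∈ D') := sublist_eq_filter hσrank.1 hρrank.1 hρσ hρrank.2
      rw [hp σ hσrank, ← heq]
      exact hρp
  · intro ρ₁ h₁ ρ₂ h₂ hne
    rw [Finset.mem_coe, Finset.mem_filter, mem_rankings_iff] at h₁ h₂
    rw [Function.onFun, Finset.disjoint_left]
    intro σ hσ₁ hσ₂
    rw [Finset.mem_filter, mem_rankings_iff] at hσ₁ hσ₂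
    apply hne
    rw [sublist_eq_filter hσ₁.1.1 h₁.1.1 hσ₁.2 h₁.1.2,
        sublist_eq_filter hσ₂.1.1 h₂.1.1 hσ₂.2 h₂.1.2]

/-- Lemma L: extension counting -/
lemma card_ext {n : ℕ} : ∀ (k : ℕ) (C D : Finset (Fin n)) (σ' : Word n),
    D ⊆ C → C.card - D.card = k → IsRanking D σ' →
    ((rankings n C).filter (fun σ => σ' <+ σ)).card * D.card.factorial
      = C.card.factorial := by
  intro k
  induction k with
  | zero =>
    intro C D σ' hsub hcard hσ'
    have hle : C.card ≤ D.card := by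
      have := Finset.card_le_card hsub
      omega
    have hDC : D = C := Finset.eq_of_subset_of_card_le hsub hle
    subst hDC
    have : (rankings n D).filter (fun σ => σ' <+ σ) = {σ'} := by
      ext σ
      simp only [Finset.mem_filter, mem_rankings_iff, Finset.mem_singleton]
      constructor
      · rintro ⟨hσrank, hsub'⟩
        refine (hsub'.eq_of_length ?_).symm
        rw [← List.toFinset_card_of_nodup hσ'.1, ← List.toFinset_card_of_nodup hσrank.1,
          hσ'.2, hσrank.2]
      · rintro rfl
        exact ⟨hσ', List.Sublist.refl _⟩
    rw [this, Finset.card_singleton, one_mul]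
  | succ k ih =>
    intro C D σ' hsub hcard hσ'
    have hne : (C \ D).Nonempty := by
      rw [← Finset.card_pos, Finset.card_sdiff_of_subset hsub]
      omega
    obtain ⟨x, hx⟩ := hne
    rw [Finset.mem_sdiff] at hx
    set D' := insert x D with hD'
    have hD'sub : D' ⊆ C := Finset.insert_subset hx.1 hsub
    have hD'card : D'.card = D.card + 1 := Finset.card_insert_of_notMem hx.2
    have hpart := card_fiber_sum (p := fun σ => σ' <+ σ) hD'sub ?_
    · have hone : ((rankings n D').filter (fun ρ => σ' <+ ρ)).card = D.card + 1 := by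
        rw [card_insert_one hx.2 hσ', ← List.toFinset_card_of_nodup hσ'.1, hσ'.2]
      have hinner : ∀ ρ ∈ (rankings n D').filter (fun ρ => σ' <+ ρ),
          ((rankings n C).filter (fun σ => ρ <+ σ)).card * D'.card.factorial
            = C.card.factorial := by
        intro ρ hρ
        rw [Finset.mem_filter, mem_rankings_iff] at hρ
        exact ih C D' ρ hD'sub (by omega) hρ.1
      have hmul : ((rankings n C).filter (fun σ => σ' <+ σ)).card * D'.card.factorial
          = (D.card + 1) * C.card.factorial := by
        rw [hpart, Finset.sum_mul]
        rw [Finset.sum_congr rfl hinner, Finset.sum_const, hone, smul_eq_mul]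
      have hpos : 0 < D.card + 1 := Nat.succ_pos _
      set cnt := ((rankings n C).filter (fun σ => σ' <+ σ)).card with hcnt
      have h2 : (D.card + 1) * (cnt * D.card.factorial) = (D.card + 1) * C.card.factorial := by
        calc (D.card + 1) * (cnt * D.card.factorial)
            = cnt * ((D.card + 1) * D.card.factorial) := by ring
          _ = cnt * D'.card.factorial := by rw [hD'card, Nat.factorial_succ]
          _ = (D.card + 1) * C.card.factorial := hmul
      exact Nat.eq_of_mul_eq_mul_left hpos h2
    · intro σ hσ
      have hcont : ∀ a ∈ σ', a ∈ D' := by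
        intro a ha
        exact Finset.mem_insert_of_mem (hσ'.2 ▸ List.mem_toFinset.mpr ha)
      exact (sublist_filter_iff hcont).symm

lemma card_ext2 {n : ℕ} {C D : Finset (Fin n)} (hDC : D ⊆ C) {π τ : Word n}
    (hπ : π.toFinset ⊆ D) (hτ : τ.toFinset ⊆ D) :
    ((rankings n C).filter (fun σ => π <+ σ ∧ τ <+ σ)).card * D.card.factorial
      = ((rankings n D).filter (fun σ => π <+ σ ∧ τ <+ σ)).card * C.card.factorial := by
  have hp : ∀ σ, IsRanking C σ →
      ((π <+ σ ∧ τ <+ σ) ↔ (π <+ σ.filter (fun a => a ∈ D) ∧ τ <+ σ.filter (fun a => a ∈ D))) := by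
    intro σ hσ
    rw [sublist_filter_iff (fun a ha => hπ (List.mem_toFinset.mpr ha)),
        sublist_filter_iff (fun a ha => hτ (List.mem_toFinset.mpr ha))]
  rw [card_fiber_sum hDC _ hp, Finset.sum_mul]
  rw [Finset.sum_congr rfl (g := fun _ => C.card.factorial) ?_, Finset.sum_const, smul_eq_mul]
  · intro ρ hρ
    rw [Finset.mem_filter, mem_rankings_iff] at hρ
    exact card_ext (C.card - D.card) C D ρ hDC rfl hρ.1

lemma synth'_dirac {n : ℕ} {π : Word n} (hπ : π.Nodup) (B : Finset (Fin n)) :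
    synth' B (dirac π) = fun σ =>
      if IsRanking B σ ∧ π <+ σ
      then (Nat.factorial π.length : ℝ) / (Nat.factorial B.card : ℝ) else 0 := by
  funext σ
  simp only [synth', dirac]
  by_cases hσ : IsRanking B σ
  · rw [if_pos hσ]
    have hterm : ∀ π' ∈ allWords n,
        (if π' <+ σ then ((Nat.factorial π'.length : ℝ) / (Nat.factorial B.card : ℝ))
            * (if π' = π then (1:ℝ) else 0) else 0)
          = if π' = π then (if π <+ σ then
              (Nat.factorial π.length : ℝ) / (Nat.factorial B.card : ℝ) else 0) else 0 := by
      intro π' _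
      by_cases h1 : π' = π
      · subst h1
        by_cases h2 : π' <+ σ <;> simp [h2]
      · by_cases h2 : π' <+ σ <;> simp [h1, h2]
    rw [Finset.sum_congr rfl hterm, Finset.sum_ite_eq', if_pos (mem_allWords.mpr hπ)]
    by_cases h2 : π <+ σ
    · rw [if_pos h2, if_pos ⟨hσ, h2⟩]
    · rw [if_neg h2, if_neg (fun h => h2 h.2)]
  · rw [if_neg hσ, if_neg (fun h => hσ h.1)]

lemma sum_ranking_const {n : ℕ} (C : Finset (Fin n)) (q : Word n → Prop) [DecidablePred q] (c : ℝ) :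
    (∑ σ ∈ allWords n, if IsRanking C σ ∧ q σ then c else 0)
      = (((rankings n C).filter q).card : ℝ) * c := by
  rw [← Finset.sum_filter]
  have heq : (allWords n).filter (fun σ => IsRanking C σ ∧ q σ) = (rankings n C).filter q := by
    ext σ
    rw [Finset.mem_filter, Finset.mem_filter, mem_allWords, mem_rankings_iff]
    constructor
    · rintro ⟨_, h1, h2⟩; exact ⟨h1, h2⟩
    · rintro ⟨h1, h2⟩; exact ⟨h1.1, h1, h2⟩
  rw [heq, Finset.sum_const, nsmul_eq_mul]


/-- **Transitivity and marginal-reduction properties of the alternative embedding:**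
(1) `φ'_C (φ'_{A'} δ_π) = φ'_C δ_π` for `A ⊆ A' ⊆ C`;
(2) `M_B (φ'_C δ_π) = M_B (φ'_{A∪B} δ_π)` for `|B| ≥ 2` and `A ∪ B ⊆ C`. -/
theorem synth'_transitivity {n : ℕ} (hn : 2 ≤ n)
    (A : Finset (Fin n)) (hA : 2 ≤ A.card) (π : Word n) (hπ : IsRanking A π) :
    (∀ A' C : Finset (Fin n), A ⊆ A' → A' ⊆ C → 2 ≤ A'.card →
      synth' C (synth' A' (dirac π)) = synth' C (dirac π)) ∧
    (∀ B C : Finset (Fin n), 2 ≤ B.card → A ∪ B ⊆ C →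
      marg B (synth' C (dirac π)) = marg B (synth' (A ∪ B) (dirac π))) := by
  constructor
  · -- part (1)
    intro A' C hAA' hA'C hA'2
    rw [synth'_dirac hπ.1 A', synth'_dirac hπ.1 C]
    funext σ
    simp only [synth']
    by_cases hσ : IsRanking C σ
    · rw [if_pos hσ]
      set ρ := σ.filter (fun a => a ∈ A') with hρdef
      have hρ : IsRanking A' ρ := isRanking_filter hσ hA'C
      have hcont : ∀ a ∈ π, a ∈ A' := fun a ha => hAA' (hπ.2 ▸ List.mem_toFinset.mpr ha)
      have hiff : π <+ ρ ↔ π <+ σ := sublist_filter_iff hcont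
      rw [Finset.sum_eq_single_of_mem ρ (mem_allWords.mpr hρ.1) ?_]
      · rw [if_pos (show ρ <+ σ from List.filter_sublist)]
        have hlen : ρ.length = A'.card := by
          rw [← List.toFinset_card_of_nodup hρ.1, hρ.2]
        by_cases hps : π <+ σ
        · rw [if_pos ⟨hρ, hiff.mpr hps⟩, if_pos (⟨hσ, hps⟩ : IsRanking C σ ∧ π <+ σ), hlen]
          have h1 : (Nat.factorial A'.card : ℝ) ≠ 0 :=
            Nat.cast_ne_zero.mpr (Nat.factorial_ne_zero _)
          have h2 : (Nat.factorial C.card : ℝ) ≠ 0 :=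
            Nat.cast_ne_zero.mpr (Nat.factorial_ne_zero _)
          field_simp
        · rw [if_neg (fun h => hps (hiff.mp h.2)),
              if_neg (fun h : IsRanking C σ ∧ π <+ σ => hps h.2), mul_zero]
      · intro τ _ hne
        by_cases h1 : τ <+ σ
        · rw [if_pos h1]
          by_cases h2 : IsRanking A' τ ∧ π <+ τ
          · exact absurd (sublist_eq_filter hσ.1 h2.1.1 h1 h2.1.2) hne
          · rw [if_neg h2, mul_zero]
        · rw [if_neg h1]
    · rw [if_neg hσ, if_neg (fun h : IsRanking C σ ∧ π <+ σ => hσ h.1)]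
  · -- part (2)
    intro B C hB2 hDC
    set D := A ∪ B with hDdef
    have hπD : π.toFinset ⊆ D := hπ.2 ▸ Finset.subset_union_left
    funext τ
    simp only [marg]
    by_cases hτ : IsRanking B τ
    · rw [if_pos hτ, if_pos hτ, synth'_dirac hπ.1, synth'_dirac hπ.1]
      have hτD : τ.toFinset ⊆ D := hτ.2 ▸ Finset.subset_union_right
      have hstep : ∀ (E : Finset (Fin n)),
          (∑ σ ∈ allWords n, if τ <+ σ then
              (if IsRanking E σ ∧ π <+ σ then
                (Nat.factorial π.length : ℝ) / (Nat.factorial E.card : ℝ) else 0) else 0)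
            = (((rankings n E).filter (fun σ => π <+ σ ∧ τ <+ σ)).card : ℝ)
                * ((Nat.factorial π.length : ℝ) / (Nat.factorial E.card : ℝ)) := by
        intro E
        rw [← sum_ranking_const E (fun σ => π <+ σ ∧ τ <+ σ)]
        apply Finset.sum_congr rfl
        intro σ _
        by_cases h1 : τ <+ σ <;> by_cases h2 : IsRanking E σ <;> by_cases h3 : π <+ σ <;>
          simp [h1, h2, h3]
      rw [hstep C, hstep D]
      have key : (((rankings n C).filter (fun σ => π <+ σ ∧ τ <+ σ)).card : ℝ)
            * (Nat.factorial D.card : ℝ)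
          = (((rankings n D).filter (fun σ => π <+ σ ∧ τ <+ σ)).card : ℝ)
            * (Nat.factorial C.card : ℝ) := by
        exact_mod_cast congrArg (Nat.cast (R := ℝ)) (card_ext2 hDC hπD hτD)
      have h1 : (Nat.factorial C.card : ℝ) ≠ 0 := Nat.cast_ne_zero.mpr (Nat.factorial_ne_zero _)
      have h2 : (Nat.factorial D.card : ℝ) ≠ 0 := Nat.cast_ne_zero.mpr (Nat.factorial_ne_zero _)
      field_simp
      nlinarith [key]
    · rw [if_neg hτ, if_neg hτ]
end

section
/- Insertion identity for marginals (correctness of the low-pass filters): let A ⊆ [n] with |A| ≥ 2, F ∈ L(Γ(A)), let π = π₁…π_j be a duplicate-free word with content C := content(π) satisfying C ⊊ A and |C| ≥ 2, and let b ∈ A ∖ C. Then M_C F(π) = M_{C∪{b}}F(b π₁…π_j) + M_{C∪{b}}F(π₁ b π₂…π_j) + … + M_{C∪{b}}F(π₁…π_j b), the sum ranging over the j+1 words obtained by inserting b into π at each possible position. Moreover, for any distinct a, b ∈ A: Σ_{σ∈Γ(A)} F(σ) = M_{{a,b}}F(ab) + M_{{a,b}}F(ba). -/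
open Finset
open scoped List

namespace MargAux

variable {n : ℕ}

lemma mem_rankings_iff {A : Finset (Fin n)} {σ : Word n} :
    σ ∈ rankings n A ↔ IsRanking A σ := by
  rw [rankings, List.mem_toFinset, List.mem_permutations]
  constructor
  · intro h
    refine ⟨h.nodup_iff.mpr A.nodup_toList, ?_⟩
    rw [List.toFinset_eq_of_perm _ _ h, Finset.toList_toFinset]
  · rintro ⟨h1, h2⟩
    exact List.perm_of_nodup_nodup_toFinset_eq h1 A.nodup_toList
      (by rw [h2, Finset.toList_toFinset])

lemma rankings_subset_allWords (A : Finset (Fin n)) : rankings n A ⊆ allWords n :=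
  fun σ hσ => Finset.mem_biUnion.mpr ⟨A, Finset.mem_univ A, hσ⟩

lemma sublist_iff_eq_filter {σ τ : Word n} (B : Finset (Fin n)) (hσ : σ.Nodup) (hτ : τ.Nodup)
    (hB : τ.toFinset = B) :
    τ <+ σ ↔ τ = σ.filter (fun a => decide (a ∈ B)) := by
  constructor
  · intro h
    have hτf : τ.filter (fun a => decide (a ∈ B)) = τ :=
      List.filter_eq_self.mpr fun a ha => by
        simp only [decide_eq_true_eq]; rw [← hB]; exact List.mem_toFinset.mpr ha
    have h2 : τ <+ σ.filter (fun a => decide (a ∈ B)) := by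
      rw [← hτf]; exact h.filter _
    have hsub' : ∀ a ∈ B, a ∈ σ := fun a ha =>
      h.subset (List.mem_toFinset.mp (by rw [hB]; exact ha))
    have hfnd : (σ.filter (fun a => decide (a ∈ B))).Nodup := hσ.filter _
    have hfts : (σ.filter (fun a => decide (a ∈ B))).toFinset = B := by
      ext a
      simp only [List.mem_toFinset, List.mem_filter, decide_eq_true_eq]
      exact ⟨fun h => h.2, fun h => ⟨hsub' a h, h⟩⟩
    have hlen : τ.length = (σ.filter (fun a => decide (a ∈ B))).length := by
      rw [← List.toFinset_card_of_nodup hτ, ← List.toFinset_card_of_nodup hfnd, hB, hfts]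
    exact h2.eq_of_length hlen
  · intro h; rw [h]; exact List.filter_sublist

lemma insertIdx_eq_take_cons_drop : ∀ (t : ℕ) (l : Word n) (b : Fin n), t ≤ l.length →
    l.insertIdx t b = l.take t ++ b :: l.drop t
  | 0, l, b, _ => by simp
  | t+1, [], b, h => by simp at h
  | t+1, a :: l, b, h => by
    rw [List.insertIdx_succ_cons, insertIdx_eq_take_cons_drop t l b (Nat.le_of_succ_le_succ h)]
    simp

lemma split_unique {b : Fin n} : ∀ (s₁ s₂ t₁ t₂ : Word n), b ∉ s₁ → b ∉ s₂ →
    s₁ ++ b :: t₁ = s₂ ++ b :: t₂ → s₁ = s₂ ∧ t₁ = t₂ := by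
  intro s₁
  induction s₁ with
  | nil =>
    intro s₂ t₁ t₂ h1 h2 h
    cases s₂ with
    | nil => simpa using h
    | cons a s =>
      simp only [List.nil_append, List.cons_append, List.cons.injEq] at h
      exact absurd (by rw [h.1]; exact List.mem_cons_self) h2
  | cons a s ih =>
    intro s₂ t₁ t₂ h1 h2 h
    cases s₂ with
    | nil =>
      simp only [List.cons_append, List.nil_append, List.cons.injEq] at h
      exact absurd (by rw [h.1]; exact List.mem_cons_self) h1
    | cons a' s' =>
      simp only [List.cons_append, List.cons.injEq] at h
      obtain ⟨rfl, h⟩ := h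
      have := ih s' t₁ t₂ (fun hm => h1 (List.mem_cons_of_mem _ hm))
        (fun hm => h2 (List.mem_cons_of_mem _ hm)) h
      exact ⟨by rw [this.1], this.2⟩

lemma key_count (π : Word n) (b : Fin n) (hb : b ∉ π) (u v : Word n)
    (hu : b ∉ u) (hv : b ∉ v) (c : ℝ) :
    (∑ t ∈ Finset.range (π.length + 1),
      (if π.insertIdx t b = u ++ b :: v then c else 0)) =
    (if π = u ++ v then c else 0) := by
  have key : ∀ t ∈ Finset.range (π.length + 1),
      (π.insertIdx t b = u ++ b :: v ↔ (π = u ++ v ∧ t = u.length)) := by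
    intro t ht
    rw [Finset.mem_range, Nat.lt_succ_iff] at ht
    rw [insertIdx_eq_take_cons_drop t π b ht]
    constructor
    · intro h
      have hbt : b ∉ π.take t := fun hm => hb ((List.take_sublist t π).subset hm)
      obtain ⟨h1, h2⟩ := split_unique _ _ _ _ hbt hu h
      have ht' : t = u.length := by
        rw [← h1, List.length_take, Nat.min_eq_left ht]
      exact ⟨by rw [← h1, ← h2, List.take_append_drop], ht'⟩
    · rintro ⟨h1, h2⟩
      subst h2
      rw [h1, List.take_left, List.drop_left]
  by_cases hπ : π = u ++ v
  · rw [if_pos hπ]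
    rw [Finset.sum_congr rfl (fun t ht =>
      if_congr ((key t ht).trans
        (show (π = u ++ v ∧ t = u.length) ↔ t = u.length by simp [hπ])) rfl rfl)]
    rw [Finset.sum_ite_eq' (Finset.range (π.length + 1)) u.length (fun _ => c)]
    rw [if_pos (Finset.mem_range.mpr (Nat.lt_succ_of_le
      (by rw [hπ, List.length_append]; exact Nat.le_add_right _ _)))]
  · rw [if_neg hπ]
    rw [Finset.sum_congr rfl (fun t ht => by
      rw [if_congr (key t ht) rfl rfl, if_neg (fun hc => hπ hc.1)])]
    exact Finset.sum_const_zero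

lemma insertIdx_perm (π : Word n) (b : Fin n) {t : ℕ} (ht : t ≤ π.length) :
    π.insertIdx t b ~ b :: π := by
  rw [insertIdx_eq_take_cons_drop t π b ht]
  have := @List.perm_middle _ b (π.take t) (π.drop t)
  rwa [List.take_append_drop] at this

end MargAux

/-- **Insertion identity for marginals (correctness of the low-pass filters):**
for `F ∈ L(Γ(A))`, a word `π` with content `C ⊊ A`, `|C| ≥ 2`, and `b ∈ A ∖ C`:
`M_C F(π) = Σ_{t=0}^{|π|} M_{C∪{b}} F (π with b inserted at position t)`;
moreover for distinct `a, b' ∈ A`: `Σ_{σ∈Γ(A)} F σ = M_{{a,b'}}F(ab') + M_{{a,b'}}F(b'a)`. -/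
theorem marg_insert_identity {n : ℕ} (hn : 2 ≤ n)
    (A : Finset (Fin n)) (hA : 2 ≤ A.card)
    (F : Word n → ℝ) (hF : MemL A F)
    (π : Word n) (hπnd : π.Nodup) (hπ2 : 2 ≤ π.toFinset.card)
    (hsub : π.toFinset ⊂ A) (b : Fin n) (hb : b ∈ A \ π.toFinset) :
    (marg π.toFinset F π =
      ∑ t ∈ Finset.range (π.length + 1),
        marg (insert b π.toFinset) F (π.insertIdx t b)) ∧
    (∀ a b' : Fin n, a ∈ A → b' ∈ A → a ≠ b' →
      ∑ σ ∈ rankings n A, F σ = marg {a, b'} F [a, b'] + marg {a, b'} F [b', a]) := by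
  have hbA : b ∈ A := (Finset.mem_sdiff.mp hb).1
  have hbC : b ∉ π.toFinset := (Finset.mem_sdiff.mp hb).2
  have hbπ : b ∉ π := fun h => hbC (List.mem_toFinset.mpr h)
  constructor
  · -- insertion identity
    have step : ∀ t ∈ Finset.range (π.length + 1),
        marg (insert b π.toFinset) F (π.insertIdx t b)
          = ∑ σ ∈ allWords n, (if π.insertIdx t b <+ σ then F σ else 0) := by
      intro t ht
      rw [Finset.mem_range, Nat.lt_succ_iff] at ht
      have hperm := MargAux.insertIdx_perm π b ht
      have hnd : (π.insertIdx t b).Nodup :=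
        hperm.nodup_iff.mpr (List.nodup_cons.mpr ⟨hbπ, hπnd⟩)
      have hts : (π.insertIdx t b).toFinset = insert b π.toFinset := by
        rw [List.toFinset_eq_of_perm _ _ hperm, List.toFinset_cons]
      simp only [marg]
      rw [if_pos ⟨hnd, hts⟩]
    rw [Finset.sum_congr rfl step, Finset.sum_comm]
    have hIR : IsRanking π.toFinset π := ⟨hπnd, rfl⟩
    simp only [marg]
    rw [if_pos hIR]
    refine Finset.sum_congr rfl fun σ hσ => ?_
    by_cases hFσ : F σ = 0
    · simp [hFσ]
    · obtain ⟨hσnd, hσts⟩ := hF σ hFσ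
      have hbσ : b ∈ σ := by rw [← List.mem_toFinset, hσts]; exact hbA
      have hbρ : b ∈ σ.filter (fun a => decide (a ∈ insert b π.toFinset)) := by
        rw [List.mem_filter]
        exact ⟨hbσ, by simp⟩
      obtain ⟨u, v, huv⟩ := List.append_of_mem hbρ
      have hρnd : (u ++ b :: v).Nodup := huv ▸ (hσnd.filter _)
      have hnd3 := List.nodup_append'.mp hρnd
      have hbu : b ∉ u := fun h => hnd3.2.2 h List.mem_cons_self
      have hbv : b ∉ v := (List.nodup_cons.mp hnd3.2.1).1
      have helem : ∀ a, a ∈ u ∨ a ∈ v → a ∈ π.toFinset := by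
        intro a ha
        have haρ : a ∈ u ++ b :: v := by
          rcases ha with h | h
          · exact List.mem_append_left _ h
          · exact List.mem_append_right _ (List.mem_cons_of_mem _ h)
        rw [← huv, List.mem_filter] at haρ
        have h2 : a ∈ insert b π.toFinset := by simpa using haρ.2
        rcases Finset.mem_insert.mp h2 with h | h
        · exfalso
          rcases ha with h' | h'
          · exact hbu (h ▸ h')
          · exact hbv (h ▸ h')
        · exact h
      have hfilterC : σ.filter (fun a => decide (a ∈ π.toFinset)) = u ++ v := by
        have hstep : σ.filter (fun a => decide (a ∈ π.toFinset))
            = (σ.filter (fun a => decide (a ∈ insert b π.toFinset))).filter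
                (fun a => decide (a ∈ π.toFinset)) := by
          rw [List.filter_filter]
          apply List.filter_congr
          intro a _
          by_cases h : a ∈ π.toFinset
          · simp [h, Finset.mem_insert_of_mem h]
          · simp [h]
        rw [hstep, huv, List.filter_append,
          List.filter_eq_self.mpr (fun a ha => by simpa using helem a (Or.inl ha)),
          List.filter_cons_of_neg (by simpa using hbC),
          List.filter_eq_self.mpr (fun a ha => by simpa using helem a (Or.inr ha))]
      have hiff1 : (π <+ σ) ↔ π = u ++ v := by
        rw [MargAux.sublist_iff_eq_filter π.toFinset hσnd hπnd rfl, hfilterC]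
      have hiff2 : ∀ t ∈ Finset.range (π.length + 1),
          ((π.insertIdx t b <+ σ) ↔ π.insertIdx t b = u ++ b :: v) := by
        intro t ht
        rw [Finset.mem_range, Nat.lt_succ_iff] at ht
        have hperm := MargAux.insertIdx_perm π b ht
        have hnd : (π.insertIdx t b).Nodup :=
          hperm.nodup_iff.mpr (List.nodup_cons.mpr ⟨hbπ, hπnd⟩)
        have hts : (π.insertIdx t b).toFinset = insert b π.toFinset := by
          rw [List.toFinset_eq_of_perm _ _ hperm, List.toFinset_cons]
        rw [MargAux.sublist_iff_eq_filter (insert b π.toFinset) hσnd hnd hts, huv]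
      calc (if π <+ σ then F σ else 0)
          = (if π = u ++ v then F σ else 0) := if_congr hiff1 rfl rfl
        _ = ∑ t ∈ Finset.range (π.length + 1),
              (if π.insertIdx t b = u ++ b :: v then F σ else 0) :=
            (MargAux.key_count π b hbπ u v hbu hbv (F σ)).symm
        _ = ∑ t ∈ Finset.range (π.length + 1),
              (if π.insertIdx t b <+ σ then F σ else 0) :=
            Finset.sum_congr rfl fun t ht => (if_congr (hiff2 t ht) rfl rfl).symm
  · -- two-element marginal identity
    intro a b' ha hb' hab
    have h1 : IsRanking ({a, b'} : Finset (Fin n)) [a, b'] := ⟨by simp [hab], by simp⟩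
    have h2 : IsRanking ({a, b'} : Finset (Fin n)) [b', a] :=
      ⟨by simp [hab.symm], by simp [Finset.pair_comm]⟩
    simp only [marg]
    rw [if_pos h1, if_pos h2, ← Finset.sum_add_distrib,
      ← Finset.sum_subset (MargAux.rankings_subset_allWords A) (fun σ _ hσ => by
        have hFσ : F σ = 0 := by
          by_contra h
          exact hσ (MargAux.mem_rankings_iff.mpr (hF σ h))
        simp [hFσ])]
    refine Finset.sum_congr rfl fun σ hσ => ?_
    obtain ⟨hσnd, hσts⟩ := MargAux.mem_rankings_iff.mp hσ
    set ρ := σ.filter (fun x => decide (x ∈ ({a, b'} : Finset (Fin n)))) with hρdef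
    have hρnd : ρ.Nodup := hσnd.filter _
    have haσ : a ∈ σ := by rw [← List.mem_toFinset, hσts]; exact ha
    have hb'σ : b' ∈ σ := by rw [← List.mem_toFinset, hσts]; exact hb'
    have hρts : ρ.toFinset = ({a, b'} : Finset (Fin n)) := by
      ext x
      simp only [hρdef, List.mem_toFinset, List.mem_filter, decide_eq_true_eq]
      constructor
      · exact fun h => h.2
      · intro h
        refine ⟨?_, h⟩
        rcases Finset.mem_insert.mp h with h | h
        · rwa [h]
        · rw [Finset.mem_singleton.mp h]; exact hb'σ
    have hρlen : ρ.length = 2 := by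
      rw [← List.toFinset_card_of_nodup hρnd, hρts, Finset.card_pair hab]
    obtain ⟨x, y, hxy⟩ := List.length_eq_two.mp hρlen
    have hxmem : x ∈ ({a, b'} : Finset (Fin n)) := by
      rw [← hρts, hxy]; simp
    have hymem : y ∈ ({a, b'} : Finset (Fin n)) := by
      rw [← hρts, hxy]; simp
    have hxny : x ≠ y := by
      have := hxy ▸ hρnd
      simpa using (List.nodup_cons.mp this).1
    have hxab : x = a ∨ x = b' := by simpa using hxmem
    have hyab : y = a ∨ y = b' := by simpa using hymem
    have hcases : ρ = [a, b'] ∨ ρ = [b', a] := by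
      rw [hxy]
      rcases hxab with h | h <;> rcases hyab with h' | h'
      · exact absurd (h.trans h'.symm) hxny
      · left; rw [h, h']
      · right; rw [h, h']
      · exact absurd (h.trans h'.symm) hxny
    have hiffa : ([a, b'] <+ σ) ↔ [a, b'] = ρ :=
      MargAux.sublist_iff_eq_filter ({a, b'} : Finset (Fin n)) hσnd h1.1 h1.2
    have hiffb : ([b', a] <+ σ) ↔ [b', a] = ρ :=
      MargAux.sublist_iff_eq_filter ({a, b'} : Finset (Fin n)) hσnd h2.1 h2.2
    rcases hcases with h | h
    · rw [if_pos (hiffa.mpr h.symm), if_neg (fun hc => by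
        have := (hiffb.mp hc).trans h
        simp only [List.cons.injEq] at this
        exact hab this.2.1), add_zero]
    · rw [if_neg (fun hc => by
        have := (hiffa.mp hc).trans h
        simp only [List.cons.injEq] at this
        exact hab this.1), if_pos (hiffb.mpr h.symm), zero_add]
end
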